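/- Let P and Q be finite connected posets on disjoint sets X₁ and X₂ and let v ∈ X₂ with v ∉ min(Q). Then { I ⊆ X₁ ⊔ X₂ : I ◎ (P ↘_v Q) } = { X₁ ∪ J : J ◎ Q and v ∈ J } ∪ { J ⊆ X₂ : J ◎ Q and v ∉ J }; moreover, for J ◎ Q with v ∈ J, the induced subposet of P ↘_v Q on X₁ ∪ J equals the grafting P ↘_v J of P above the vertex v of the induced poset on J. -/

import Mathlib

open scoped Classical

/-- A finite poset on a subset (`carrier`) of an ambient type `α`. -/
structure FinPoset (α : Type*) where
  carrier : Finset α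
  le : α → α → Prop
  mem_of_le : ∀ ⦃x y⦄, le x y → x ∈ carrier ∧ y ∈ carrier
  le_refl : ∀ x ∈ carrier, le x x
  le_trans : ∀ ⦃x y z⦄, le x y → le y z → le x z
  le_antisymm : ∀ ⦃x y⦄, le x y → le y x → x = y

namespace FinPoset

variable {α : Type*} [DecidableEq α]

/-- The strict order `x <_P y`. -/
def lt (P : FinPoset α) (x y : α) : Prop := P.le x y ∧ x ≠ y

/-- `min(P)`: the set of minimal elements of `P`. -/
noncomputable def minSet (P : FinPoset α) : Finset α :=
  P.carrier.filter (fun x => ∀ y, P.le y x → y = x)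

/-- Connectivity of a subset `S`, for the graph with edges between comparable pairs. -/
def ConnOn (P : FinPoset α) (S : Set α) : Prop :=
  ∀ x ∈ S, ∀ y ∈ S,
    Relation.ReflTransGen (fun a b => a ∈ S ∧ b ∈ S ∧ (P.le a b ∨ P.le b a)) x y

/-- A finite poset is connected if it is nonempty and any two elements are linked by a
chain of comparable pairs. -/
def Connected (P : FinPoset α) : Prop :=
  P.carrier.Nonempty ∧ P.ConnOn ↑P.carrier

/-- `I` is a connected component of `S` (for the comparability graph of `P`). -/
def IsCC (P : FinPoset α) (S I : Set α) : Prop :=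
  I.Nonempty ∧ I ⊆ S ∧ P.ConnOn I ∧
    ∀ x ∈ I, ∀ y ∈ S, (P.le x y ∨ P.le y x) → y ∈ I

/-- `I_- = {x ∈ P \ I : ∃ y ∈ I, x ≤_P y}`. -/
noncomputable def below (P : FinPoset α) (I : Finset α) : Finset α :=
  (P.carrier \ I).filter (fun x => ∃ y ∈ I, P.le x y)

/-- `I ◎ P` : `I_-` is a singleton `{w}` with `w ∈ min(P)`, and `I` is a connected
component of `{x ∈ P : w <_P x}`. -/
def Circ (P : FinPoset α) (I : Finset α) : Prop :=
  ∃ w, P.below I = {w} ∧ w ∈ P.minSet ∧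
    P.IsCC {x | x ∈ P.carrier ∧ P.lt w x} ↑I

/-- The induced poset on a subset `S`. -/
def restrict (P : FinPoset α) (S : Finset α) : FinPoset α where
  carrier := P.carrier ∩ S
  le x y := P.le x y ∧ x ∈ S ∧ y ∈ S
  mem_of_le := by
    intro x y h
    rcases P.mem_of_le h.1 with ⟨hx, hy⟩
    exact ⟨Finset.mem_inter.2 ⟨hx, h.2.1⟩, Finset.mem_inter.2 ⟨hy, h.2.2⟩⟩
  le_refl := by
    intro x hx
    rcases Finset.mem_inter.1 hx with ⟨h1, h2⟩
    exact ⟨P.le_refl x h1, h2, h2⟩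
  le_trans := by
    rintro x y z ⟨h1, hx, hy⟩ ⟨h2, _, hz⟩
    exact ⟨P.le_trans h1 h2, hx, hz⟩
  le_antisymm := by
    rintro x y ⟨h1, _, _⟩ ⟨h2, _, _⟩
    exact P.le_antisymm h1 h2

/-- The grafting `P ↘_v Q` of `P` above the vertex `v` of `Q` (auxiliary version, with
the disjointness hypotheses as arguments). -/
def graftAux (P Q : FinPoset α) (v : α) (hd : Disjoint P.carrier Q.carrier)
    (hv : v ∈ Q.carrier) : FinPoset α where
  carrier := P.carrier ∪ Q.carrier
  le x y := P.le x y ∨ Q.le x y ∨ (Q.le x v ∧ y ∈ P.carrier)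
  mem_of_le := by
    rintro x y (h | h | ⟨h1, h2⟩)
    · rcases P.mem_of_le h with ⟨hx, hy⟩
      exact ⟨Finset.mem_union_left _ hx, Finset.mem_union_left _ hy⟩
    · rcases Q.mem_of_le h with ⟨hx, hy⟩
      exact ⟨Finset.mem_union_right _ hx, Finset.mem_union_right _ hy⟩
    · exact ⟨Finset.mem_union_right _ (Q.mem_of_le h1).1, Finset.mem_union_left _ h2⟩
  le_refl := by
    intro x hx
    rcases Finset.mem_union.1 hx with h | h
    · exact Or.inl (P.le_refl x h)
    · exact Or.inr (Or.inl (Q.le_refl x h))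
  le_trans := by
    rintro x y z (h1 | h1 | ⟨h1, h1'⟩) (h2 | h2 | ⟨h2, h2'⟩)
    · exact Or.inl (P.le_trans h1 h2)
    · exact absurd (Q.mem_of_le h2).1 (Finset.disjoint_left.1 hd (P.mem_of_le h1).2)
    · exact absurd (Q.mem_of_le h2).1 (Finset.disjoint_left.1 hd (P.mem_of_le h1).2)
    · exact absurd (P.mem_of_le h2).1 (Finset.disjoint_right.1 hd (Q.mem_of_le h1).2)
    · exact Or.inr (Or.inl (Q.le_trans h1 h2))
    · exact Or.inr (Or.inr ⟨Q.le_trans h1 h2, h2'⟩)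
    · exact Or.inr (Or.inr ⟨h1, (P.mem_of_le h2).2⟩)
    · exact absurd (Q.mem_of_le h2).1 (Finset.disjoint_left.1 hd h1')
    · exact absurd (Q.mem_of_le h2).1 (Finset.disjoint_left.1 hd h1')
  le_antisymm := by
    rintro x y (h1 | h1 | ⟨h1, h1'⟩) (h2 | h2 | ⟨h2, h2'⟩)
    · exact P.le_antisymm h1 h2
    · exact absurd (Q.mem_of_le h2).1 (Finset.disjoint_left.1 hd (P.mem_of_le h1).2)
    · exact absurd (Q.mem_of_le h2).1 (Finset.disjoint_left.1 hd (P.mem_of_le h1).2)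
    · exact absurd (P.mem_of_le h2).1 (Finset.disjoint_right.1 hd (Q.mem_of_le h1).2)
    · exact Q.le_antisymm h1 h2
    · exact absurd (Q.mem_of_le h1).1 (Finset.disjoint_left.1 hd h2')
    · exact absurd (P.mem_of_le h2).2 (Finset.disjoint_right.1 hd (Q.mem_of_le h1).1)
    · exact absurd (Q.mem_of_le h2).1 (Finset.disjoint_left.1 hd h1')
    · exact absurd (Q.mem_of_le h1).1 (Finset.disjoint_left.1 hd h2')
  
/-- The grafting `P ↘_v Q` of `P` above the vertex `v` of `Q`: the poset on
`X₁ ⊔ X₂` restricting to `P` on `X₁` and to `Q` on `X₂`, with `q ≤ p` for `q ∈ X₂`,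
`p ∈ X₁` iff `q ≤_Q v`.  (Junk value when the carriers are not disjoint or `v ∉ Q`.) -/
noncomputable def graft (P Q : FinPoset α) (v : α) : FinPoset α :=
  if h : Disjoint P.carrier Q.carrier ∧ v ∈ Q.carrier then P.graftAux Q v h.1 h.2 else P

/-- The set of subsets `I` of the carrier with `I ◎ P`. -/
noncomputable def circSet (P : FinPoset α) : Finset (Finset α) :=
  P.carrier.powerset.filter (fun I => P.Circ I)

/-- Order isomorphisms from `A` to `B`, encoded as maps `α → α` that are the identity
outside of the carrier of `A`. -/
def Isos (A B : FinPoset α) : Set (α → α) :=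
  {f | Set.BijOn f ↑A.carrier ↑B.carrier ∧
    (∀ x ∈ A.carrier, ∀ y ∈ A.carrier, (A.le x y ↔ B.le (f x) (f y))) ∧
    ∀ x, x ∉ A.carrier → f x = x}

/-- `⟨A, B⟩`: the number of order isomorphisms from `A` to `B`. -/
noncomputable def pairing (A B : FinPoset α) : ℕ := Nat.card ↥(Isos A B)

/-- The NAP coproduct `δ(P) = (1/|min(P)|) Σ_{I ◎ P} I ⊗ (P \ I)`, with values in the
rational vector space spanned by pairs of finite posets. -/
noncomputable def delta (P : FinPoset α) : (FinPoset α × FinPoset α) →₀ ℚ :=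
  ((P.minSet.card : ℚ))⁻¹ • ∑ I ∈ P.circSet,
    Finsupp.single (P.restrict I, P.restrict (P.carrier \ I)) (1 : ℚ)

end FinPoset

namespace FinPoset

variable {α : Type*} [DecidableEq α] {P Q : FinPoset α} {v : α}

lemma mem_circSet {I : Finset α} :
    I ∈ P.circSet ↔ I ⊆ P.carrier ∧ P.Circ I := by
  simp [circSet, Finset.mem_filter, Finset.mem_powerset]

lemma mem_below {I : Finset α} {x : α} :
    x ∈ P.below I ↔ (x ∈ P.carrier ∧ x ∉ I) ∧ ∃ y ∈ I, P.le x y := by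
  simp [below, Finset.mem_filter, Finset.mem_sdiff]

lemma notin_P (hd : Disjoint P.carrier Q.carrier) {x : α} (hx : x ∈ Q.carrier) :
    x ∉ P.carrier := fun h => Finset.disjoint_left.1 hd h hx

lemma notin_Q (hd : Disjoint P.carrier Q.carrier) {x : α} (hx : x ∈ P.carrier) :
    x ∉ Q.carrier := fun h => Finset.disjoint_left.1 hd hx h

lemma graft_carrier (hd : Disjoint P.carrier Q.carrier) (hv : v ∈ Q.carrier) :
    (P.graft Q v).carrier = P.carrier ∪ Q.carrier := by
  rw [graft, dif_pos ⟨hd, hv⟩]; rfl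

lemma graft_le (hd : Disjoint P.carrier Q.carrier) (hv : v ∈ Q.carrier) {x y : α} :
    (P.graft Q v).le x y ↔ (P.le x y ∨ Q.le x y ∨ (Q.le x v ∧ y ∈ P.carrier)) := by
  rw [graft, dif_pos ⟨hd, hv⟩]; rfl

lemma graft_le_QQ (hd : Disjoint P.carrier Q.carrier) (hv : v ∈ Q.carrier) {x y : α}
    (hy : y ∈ Q.carrier) (h : (P.graft Q v).le x y) : Q.le x y := by
  rcases (graft_le hd hv).1 h with h | h | ⟨h1, h2⟩
  · exact absurd (P.mem_of_le h).2 (notin_P hd hy)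
  · exact h
  · exact absurd h2 (notin_P hd hy)

lemma graft_le_QP (hd : Disjoint P.carrier Q.carrier) (hv : v ∈ Q.carrier) {x y : α}
    (hx : x ∈ Q.carrier) (hy : y ∈ P.carrier) (h : (P.graft Q v).le x y) : Q.le x v := by
  rcases (graft_le hd hv).1 h with h | h | ⟨h1, h2⟩
  · exact absurd hx (notin_Q hd (P.mem_of_le h).1)
  · exact absurd hy (notin_P hd (Q.mem_of_le h).2)
  · exact h1

lemma graft_not_le_PQ (hd : Disjoint P.carrier Q.carrier) (hv : v ∈ Q.carrier) {x y : α}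
    (hx : x ∈ P.carrier) (hy : y ∈ Q.carrier) : ¬ (P.graft Q v).le x y := by
  intro h
  rcases (graft_le hd hv).1 h with h | h | ⟨h1, h2⟩
  · exact notin_P hd hy (P.mem_of_le h).2
  · exact notin_Q hd hx (Q.mem_of_le h).1
  · exact notin_P hd hy h2

lemma graft_le_PP (hd : Disjoint P.carrier Q.carrier) (hv : v ∈ Q.carrier) {x y : α}
    (hx : x ∈ P.carrier) (h : (P.graft Q v).le x y) : P.le x y := by
  rcases (graft_le hd hv).1 h with h | h | ⟨h1, h2⟩
  · exact h
  · exact absurd hx (notin_P hd (Q.mem_of_le h).1)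
  · exact absurd hx (notin_P hd (Q.mem_of_le h1).1)

lemma graft_minSet (hd : Disjoint P.carrier Q.carrier) (hv : v ∈ Q.carrier) :
    (P.graft Q v).minSet = Q.minSet := by
  ext x
  simp only [minSet, Finset.mem_filter, graft_carrier hd hv, Finset.mem_union]
  constructor
  · rintro ⟨hx | hx, h⟩
    · have hvx : v = x :=
        h v ((graft_le hd hv).2 (Or.inr (Or.inr ⟨Q.le_refl v hv, hx⟩)))
      exact absurd hx (notin_P hd (hvx ▸ hv))
    · exact ⟨hx, fun y hy => h y ((graft_le hd hv).2 (Or.inr (Or.inl hy)))⟩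
  · rintro ⟨hx, h⟩
    refine ⟨Or.inr hx, fun y hy => ?_⟩
    exact h y (graft_le_QQ hd hv hx hy)

end FinPoset

namespace FinPoset

variable {α : Type*} [DecidableEq α] {P Q : FinPoset α} {v : α}

/-- Backward direction, case `v ∉ J`. -/
lemma circ_sub (hd : Disjoint P.carrier Q.carrier) (hv : v ∈ Q.carrier)
    (hvm : v ∉ Q.minSet) {J : Finset α} (hJc : J ⊆ Q.carrier) (hJ : Q.Circ J)
    (hvJ : v ∉ J) : (P.graft Q v).Circ J := by
  obtain ⟨w, hb, hwm, hne, hsub, hconn, hclose⟩ := hJ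
  have hwQ : w ∈ Q.carrier := (Finset.mem_filter.1 hwm).1
  have hwP : w ∉ P.carrier := notin_P hd hwQ
  have hwv : w ≠ v := fun e => hvm (e ▸ hwm)
  have hwJ : w ∉ J := fun h => (hsub h).2.2 rfl
  have key : ∀ y ∈ J, ¬ Q.le y v := by
    intro y hy hle
    exact hvJ (hclose y hy v ⟨hv, Q.le_trans (hsub hy).2.1 hle, hwv⟩ (Or.inl hle))
  refine ⟨w, ?_, ?_, hne, ?_, ?_, ?_⟩
  · -- below
    apply Finset.eq_singleton_iff_unique_mem.2
    obtain ⟨y0, hy0⟩ := hne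
    have hy0J : y0 ∈ J := hy0
    constructor
    · refine mem_below.2 ⟨⟨?_, hwJ⟩, y0, hy0J, (graft_le hd hv).2 (Or.inr (Or.inl (hsub hy0).2.1))⟩
      rw [graft_carrier hd hv]; exact Finset.mem_union_right _ hwQ
    · rintro x hx
      obtain ⟨⟨hxc, hxJ⟩, y, hyJ, hle⟩ := mem_below.1 hx
      have hyQ : y ∈ Q.carrier := hJc hyJ
      have hQle : Q.le x y := graft_le_QQ hd hv hyQ hle
      have : x ∈ Q.below J := mem_below.2 ⟨⟨(Q.mem_of_le hQle).1, hxJ⟩, y, hyJ, hQle⟩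
      rw [hb] at this; exact Finset.mem_singleton.1 this
  · rw [graft_minSet hd hv]; exact hwm
  · -- subset
    intro x hx
    have hx' := hsub hx
    refine ⟨?_, (graft_le hd hv).2 (Or.inr (Or.inl hx'.2.1)), hx'.2.2⟩
    rw [graft_carrier hd hv]; exact Finset.mem_union_right _ hx'.1
  · -- conn
    intro x hx y hy
    refine Relation.ReflTransGen.mono ?_ _ _ (hconn x hx y hy)
    rintro a b ⟨ha, hb', hab⟩
    exact ⟨ha, hb', hab.imp (fun h => (graft_le hd hv).2 (Or.inr (Or.inl h)))
      (fun h => (graft_le hd hv).2 (Or.inr (Or.inl h)))⟩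
  · -- closure
    intro x hx y hy hcomp
    have hxJ : x ∈ J := hx
    have hxQ : x ∈ Q.carrier := hJc hxJ
    obtain ⟨hyc, hwy, hwyne⟩ := hy
    rcases (graft_le hd hv).1 hwy with h | h | ⟨h1, h2⟩
    · exact absurd (P.mem_of_le h).1 hwP
    · -- y ∈ Q.carrier
      have hyQ : y ∈ Q.carrier := (Q.mem_of_le h).2
      have hQcomp : Q.le x y ∨ Q.le y x :=
        hcomp.imp (graft_le_QQ hd hv hyQ) (graft_le_QQ hd hv hxQ)
      exact hclose x hxJ y ⟨hyQ, h, hwyne⟩ hQcomp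
    · -- y ∈ P.carrier : impossible comparability
      rcases hcomp with h | h
      · exact absurd (graft_le_QP hd hv hxQ h2 h) (key x hxJ)
      · exact absurd h (graft_not_le_PQ hd hv h2 hxQ)

/-- Backward direction, case `v ∈ J`. -/
lemma circ_union (hP : P.Connected) (hd : Disjoint P.carrier Q.carrier)
    (hv : v ∈ Q.carrier) (hvm : v ∉ Q.minSet) {J : Finset α}
    (hJc : J ⊆ Q.carrier) (hJ : Q.Circ J) (hvJ : v ∈ J) :
    (P.graft Q v).Circ (P.carrier ∪ J) := by
  obtain ⟨w, hb, hwm, hne, hsub, hconn, hclose⟩ := hJ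
  have hwQ : w ∈ Q.carrier := (Finset.mem_filter.1 hwm).1
  have hwP : w ∉ P.carrier := notin_P hd hwQ
  have hwJ : w ∉ J := fun h => (hsub h).2.2 rfl
  have hwv : Q.lt w v := (hsub (Finset.mem_coe.2 hvJ)).2
  have hGc : ∀ {x}, x ∈ P.carrier ∪ J → x ∈ (P.graft Q v).carrier := by
    intro x hx
    rw [graft_carrier hd hv]
    rcases Finset.mem_union.1 hx with h | h
    · exact Finset.mem_union_left _ h
    · exact Finset.mem_union_right _ (hJc h)
  refine ⟨w, ?_, ?_, ⟨v, Finset.mem_coe.2 (Finset.mem_union_right _ hvJ)⟩, ?_, ?_, ?_⟩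
  · -- below
    apply Finset.eq_singleton_iff_unique_mem.2
    constructor
    · refine mem_below.2 ⟨⟨?_, ?_⟩, v, Finset.mem_union_right _ hvJ,
        (graft_le hd hv).2 (Or.inr (Or.inl hwv.1))⟩
      · rw [graft_carrier hd hv]; exact Finset.mem_union_right _ hwQ
      · simp only [Finset.mem_union, not_or]; exact ⟨hwP, hwJ⟩
    · rintro x hx
      obtain ⟨⟨hxc, hxI⟩, y, hyI, hle⟩ := mem_below.1 hx
      simp only [Finset.mem_union, not_or] at hxI
      obtain ⟨hxP, hxJ⟩ := hxI
      have hxQ : x ∈ Q.carrier := by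
        rw [graft_carrier hd hv] at hxc
        rcases Finset.mem_union.1 hxc with h | h
        · exact absurd h hxP
        · exact h
      have hxbel : x ∈ Q.below J := by
        rcases Finset.mem_union.1 hyI with hy | hy
        · exact mem_below.2 ⟨⟨hxQ, hxJ⟩, v, hvJ, graft_le_QP hd hv hxQ hy hle⟩
        · exact mem_below.2 ⟨⟨hxQ, hxJ⟩, y, hy, graft_le_QQ hd hv (hJc hy) hle⟩
      rw [hb] at hxbel; exact Finset.mem_singleton.1 hxbel
  · rw [graft_minSet hd hv]; exact hwm
  · -- subset
    intro x hx
    have hx' : x ∈ P.carrier ∪ J := Finset.mem_coe.1 hx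
    refine ⟨hGc hx', ?_⟩
    rcases Finset.mem_union.1 hx' with h | h
    · exact ⟨(graft_le hd hv).2 (Or.inr (Or.inr ⟨hwv.1, h⟩)), fun e => hwP (e ▸ h)⟩
    · exact ⟨(graft_le hd hv).2 (Or.inr (Or.inl (hsub h).2.1)), (hsub h).2.2⟩
  · -- conn
    set I := P.carrier ∪ J with hI
    set R := fun a b => a ∈ (↑I : Set α) ∧ b ∈ (↑I : Set α) ∧
      ((P.graft Q v).le a b ∨ (P.graft Q v).le b a) with hR
    have hRsymm : Symmetric R := by
      rintro a b ⟨h1, h2, h3⟩; exact ⟨h2, h1, h3.symm⟩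
    have to_v : ∀ x ∈ (↑I : Set α), Relation.ReflTransGen R x v := by
      intro x hx
      have hvI : v ∈ (↑I : Set α) := Finset.mem_coe.2 (Finset.mem_union_right _ hvJ)
      rcases Finset.mem_union.1 (Finset.mem_coe.1 hx) with h | h
      · exact Relation.ReflTransGen.single
          ⟨hx, hvI, Or.inr ((graft_le hd hv).2 (Or.inr (Or.inr ⟨Q.le_refl v hv, h⟩)))⟩
      · refine Relation.ReflTransGen.mono ?_ _ _ (hconn x (Finset.mem_coe.2 h) v (Finset.mem_coe.2 hvJ))
        rintro a b ⟨ha, hb', hab⟩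
        exact ⟨Finset.mem_coe.2 (Finset.mem_union_right _ (Finset.mem_coe.1 ha)),
          Finset.mem_coe.2 (Finset.mem_union_right _ (Finset.mem_coe.1 hb')),
          hab.imp (fun h => (graft_le hd hv).2 (Or.inr (Or.inl h)))
            (fun h => (graft_le hd hv).2 (Or.inr (Or.inl h)))⟩
    intro x hx y hy
    exact (to_v x hx).trans (letI : Std.Symm R := ⟨fun a b h => hRsymm h⟩; Std.Symm.symm _ _ (to_v y hy))
  · -- closure
    intro x hx y hy hcomp
    obtain ⟨hyc, hwy, hwyne⟩ := hy
    rcases (graft_le hd hv).1 hwy with h | h | ⟨h1, h2⟩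
    · exact absurd (P.mem_of_le h).1 hwP
    · -- y ∈ Q.carrier
      have hyQ : y ∈ Q.carrier := (Q.mem_of_le h).2
      have hyJ : y ∈ J := by
        rcases Finset.mem_union.1 (Finset.mem_coe.1 hx) with hx1 | hx1
        · rcases hcomp with hc | hc
          · exact absurd hc (graft_not_le_PQ hd hv hx1 hyQ)
          · exact hclose v (Finset.mem_coe.2 hvJ) y ⟨hyQ, h, hwyne⟩
              (Or.inr (graft_le_QP hd hv hyQ hx1 hc))
        · have hQcomp : Q.le x y ∨ Q.le y x :=
            hcomp.imp (graft_le_QQ hd hv hyQ) (graft_le_QQ hd hv (hJc hx1))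
          exact hclose x (Finset.mem_coe.2 hx1) y ⟨hyQ, h, hwyne⟩ hQcomp
      exact Finset.mem_coe.2 (Finset.mem_union_right _ hyJ)
    · exact Finset.mem_coe.2 (Finset.mem_union_left _ h2)

end FinPoset

namespace FinPoset

variable {α : Type*} [DecidableEq α] {P Q : FinPoset α} {v : α}

/-- Forward direction. -/
lemma circ_graft_cases (hP : P.Connected) (hd : Disjoint P.carrier Q.carrier)
    (hv : v ∈ Q.carrier) (hvm : v ∉ Q.minSet) {I : Finset α}
    (hI : (P.graft Q v).Circ I) :
    (∃ J, J ⊆ Q.carrier ∧ Q.Circ J ∧ v ∈ J ∧ I = P.carrier ∪ J) ∨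
      (I ⊆ Q.carrier ∧ Q.Circ I ∧ v ∉ I) := by
  obtain ⟨w, hb, hwm', hne, hsub, hconn, hclose⟩ := hI
  rw [graft_minSet hd hv] at hwm'
  have hwQ : w ∈ Q.carrier := (Finset.mem_filter.1 hwm').1
  have hwP : w ∉ P.carrier := notin_P hd hwQ
  have hwv : w ≠ v := fun e => hvm (e ▸ hwm')
  have hwI : w ∉ I := fun h => (hsub h).2.2 rfl
  -- each element of I not in P.carrier lies in Q.carrier above w
  have hQside : ∀ {x}, x ∈ I → x ∉ P.carrier → x ∈ Q.carrier ∧ Q.lt w x := by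
    intro x hxI hxP
    obtain ⟨hxc, hle, hne'⟩ := hsub (Finset.mem_coe.2 hxI)
    rcases (graft_le hd hv).1 hle with h | h | ⟨h1, h2⟩
    · exact absurd (P.mem_of_le h).1 hwP
    · exact ⟨(Q.mem_of_le h).2, h, hne'⟩
    · exact absurd h2 hxP
  by_cases hx1 : ∃ p, p ∈ I ∧ p ∈ P.carrier
  · -- case: I meets P.carrier
    left
    obtain ⟨p0, hp0I, hp0P⟩ := hx1
    have hQwv : Q.le w v := by
      have := (hsub (Finset.mem_coe.2 hp0I)).2.1
      rcases (graft_le hd hv).1 this with h | h | ⟨h1, h2⟩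
      · exact absurd (P.mem_of_le h).1 hwP
      · exact absurd (Q.mem_of_le h).2 (notin_Q hd hp0P)
      · exact h1
    have upP : ∀ p ∈ P.carrier, p ∈ {x | x ∈ (P.graft Q v).carrier ∧ (P.graft Q v).lt w x} := by
      intro p hp
      refine ⟨by rw [graft_carrier hd hv]; exact Finset.mem_union_left _ hp,
        (graft_le hd hv).2 (Or.inr (Or.inr ⟨hQwv, hp⟩)), fun e => hwP (e ▸ hp)⟩
    have hPsub : ∀ p ∈ P.carrier, p ∈ I := by
      intro p hp
      have hchain := hP.2 p0 (Finset.mem_coe.2 hp0P) p (Finset.mem_coe.2 hp)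
      clear hp
      induction hchain with
      | refl => exact hp0I
      | tail _ hstep ih =>
        obtain ⟨hb1, hb2, hcomp⟩ := hstep
        exact Finset.mem_coe.1 (hclose _ (Finset.mem_coe.2 ih) _ (upP _ (Finset.mem_coe.1 hb2))
          (hcomp.imp (fun h => (graft_le hd hv).2 (Or.inl h))
            (fun h => (graft_le hd hv).2 (Or.inl h))))
    have hvI : v ∈ I := by
      refine Finset.mem_coe.1 (hclose p0 (Finset.mem_coe.2 hp0I) v
        ⟨by rw [graft_carrier hd hv]; exact Finset.mem_union_right _ hv,
         (graft_le hd hv).2 (Or.inr (Or.inl hQwv)), hwv⟩ ?_)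
      exact Or.inr ((graft_le hd hv).2 (Or.inr (Or.inr ⟨Q.le_refl v hv, hp0P⟩)))
    set J := I \ P.carrier with hJdef
    have hvP : v ∉ P.carrier := notin_P hd hv
    have hvJ : v ∈ J := Finset.mem_sdiff.2 ⟨hvI, hvP⟩
    have hJc : J ⊆ Q.carrier := fun x hx => by
      obtain ⟨hxI, hxP⟩ := Finset.mem_sdiff.1 hx
      exact (hQside hxI hxP).1
    have hIeq : I = P.carrier ∪ J := by
      have : P.carrier ⊆ I := fun p hp => hPsub p hp
      rw [hJdef, Finset.union_sdiff_of_subset this]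
    have hJup : ∀ x ∈ J, x ∈ Q.carrier ∧ Q.lt w x := by
      intro x hx
      obtain ⟨hxI, hxP⟩ := Finset.mem_sdiff.1 hx
      exact hQside hxI hxP
    have hwJ : w ∉ J := fun h => (hJup w h).2.2 rfl
    refine ⟨J, hJc, ⟨w, ?_, hwm', ⟨v, Finset.mem_coe.2 hvJ⟩, ?_, ?_, ?_⟩, hvJ, hIeq⟩
    · -- Q.below J = {w}
      apply Finset.eq_singleton_iff_unique_mem.2
      constructor
      · exact mem_below.2 ⟨⟨hwQ, hwJ⟩, v, hvJ, hQwv⟩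
      · rintro x hx
        obtain ⟨⟨hxQ, hxJ⟩, y, hyJ, hle⟩ := mem_below.1 hx
        have hxP : x ∉ P.carrier := notin_P hd hxQ
        have hxI : x ∉ I := by
          rw [hIeq]; simp only [Finset.mem_union, not_or]; exact ⟨hxP, hxJ⟩
        have : x ∈ (P.graft Q v).below I := by
          refine mem_below.2 ⟨⟨by rw [graft_carrier hd hv]; exact Finset.mem_union_right _ hxQ,
            hxI⟩, y, by rw [hIeq]; exact Finset.mem_union_right _ hyJ,
            (graft_le hd hv).2 (Or.inr (Or.inl hle))⟩
        rw [hb] at this; exact Finset.mem_singleton.1 this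
    · exact fun x hx => (hJup x (Finset.mem_coe.1 hx))
    · -- connectivity of J in Q
      intro x hx y hy
      have hxJ : x ∈ J := Finset.mem_coe.1 hx
      have hyJ : y ∈ J := Finset.mem_coe.1 hy
      set f : α → α := fun a => if a ∈ P.carrier then v else a with hf
      set RQ := fun a b => a ∈ (↑J : Set α) ∧ b ∈ (↑J : Set α) ∧ (Q.le a b ∨ Q.le b a) with hRQ
      have hstep : ∀ {a b}, (a ∈ (↑I : Set α) ∧ b ∈ (↑I : Set α) ∧
          ((P.graft Q v).le a b ∨ (P.graft Q v).le b a)) →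
          Relation.ReflTransGen RQ (f a) (f b) := by
        rintro a b ⟨haI, hbI, hcomp⟩
        have haI' : a ∈ I := Finset.mem_coe.1 haI
        have hbI' : b ∈ I := Finset.mem_coe.1 hbI
        by_cases haP : a ∈ P.carrier <;> by_cases hbP : b ∈ P.carrier
        · simp only [hf, if_pos haP, if_pos hbP]
          exact Relation.ReflTransGen.refl
        · -- a ∈ P.carrier, b ∉
          have hbJ : b ∈ J := Finset.mem_sdiff.2 ⟨hbI', hbP⟩
          have hbQ : b ∈ Q.carrier := (hQside hbI' hbP).1
          have hbv : Q.le b v := by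
            rcases hcomp with h | h
            · exact absurd h (graft_not_le_PQ hd hv haP hbQ)
            · exact graft_le_QP hd hv hbQ haP h
          simp only [hf, if_pos haP, if_neg hbP]
          exact Relation.ReflTransGen.single ⟨Finset.mem_coe.2 hvJ, Finset.mem_coe.2 hbJ,
            Or.inr hbv⟩
        · -- b ∈ P.carrier, a ∉
          have haJ : a ∈ J := Finset.mem_sdiff.2 ⟨haI', haP⟩
          have haQ : a ∈ Q.carrier := (hQside haI' haP).1
          have hav : Q.le a v := by
            rcases hcomp with h | h
            · exact graft_le_QP hd hv haQ hbP h
            · exact absurd h (graft_not_le_PQ hd hv hbP haQ)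
          simp only [hf, if_neg haP, if_pos hbP]
          exact Relation.ReflTransGen.single ⟨Finset.mem_coe.2 haJ, Finset.mem_coe.2 hvJ,
            Or.inl hav⟩
        · have haJ : a ∈ J := Finset.mem_sdiff.2 ⟨haI', haP⟩
          have hbJ : b ∈ J := Finset.mem_sdiff.2 ⟨hbI', hbP⟩
          have haQ : a ∈ Q.carrier := (hQside haI' haP).1
          have hbQ : b ∈ Q.carrier := (hQside hbI' hbP).1
          simp only [hf, if_neg haP, if_neg hbP]
          exact Relation.ReflTransGen.single ⟨Finset.mem_coe.2 haJ, Finset.mem_coe.2 hbJ,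
            hcomp.imp (graft_le_QQ hd hv hbQ) (graft_le_QQ hd hv haQ)⟩
      have lift : ∀ {a b}, Relation.ReflTransGen (fun a b => a ∈ (↑I : Set α) ∧
          b ∈ (↑I : Set α) ∧ ((P.graft Q v).le a b ∨ (P.graft Q v).le b a)) a b →
          Relation.ReflTransGen RQ (f a) (f b) := by
        intro a b h
        induction h with
        | refl => exact Relation.ReflTransGen.refl
        | tail _ hs ih => exact ih.trans (hstep hs)
      have hxI : x ∈ (↑I : Set α) :=
        Finset.mem_coe.2 (Finset.mem_sdiff.1 hxJ).1
      have hyI : y ∈ (↑I : Set α) :=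
        Finset.mem_coe.2 (Finset.mem_sdiff.1 hyJ).1
      have := lift (hconn x hxI y hyI)
      simpa only [hf, if_neg (Finset.mem_sdiff.1 hxJ).2,
        if_neg (Finset.mem_sdiff.1 hyJ).2] using this
    · -- closure
      intro x hx y hy hcomp
      have hxJ : x ∈ J := Finset.mem_coe.1 hx
      obtain ⟨hyQ, hwy⟩ := hy
      have hyI : y ∈ I := by
        refine Finset.mem_coe.1 (hclose x (Finset.mem_coe.2 (Finset.mem_sdiff.1 hxJ).1) y
          ⟨by rw [graft_carrier hd hv]; exact Finset.mem_union_right _ hyQ,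
           (graft_le hd hv).2 (Or.inr (Or.inl hwy.1)), hwy.2⟩ ?_)
        exact hcomp.imp (fun h => (graft_le hd hv).2 (Or.inr (Or.inl h)))
          (fun h => (graft_le hd hv).2 (Or.inr (Or.inl h)))
      exact Finset.mem_coe.2 (Finset.mem_sdiff.2 ⟨hyI, notin_P hd hyQ⟩)
  · -- case: I ∩ P.carrier = ∅
    right
    push_neg at hx1
    have hIQ : ∀ {x}, x ∈ I → x ∈ Q.carrier ∧ Q.lt w x :=
      fun {x} hx => hQside hx (hx1 x hx)
    have hvI : v ∉ I := by
      intro hv'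
      obtain ⟨p, hp⟩ := hP.1
      have hQwv : Q.le w v := (hIQ hv').2.1
      have hpI : p ∈ I := by
        refine Finset.mem_coe.1 (hclose v (Finset.mem_coe.2 hv') p
          ⟨by rw [graft_carrier hd hv]; exact Finset.mem_union_left _ hp,
           (graft_le hd hv).2 (Or.inr (Or.inr ⟨hQwv, hp⟩)), fun e => hwP (e ▸ hp)⟩ ?_)
        exact Or.inl ((graft_le hd hv).2 (Or.inr (Or.inr ⟨Q.le_refl v hv, hp⟩)))
      exact hx1 p hpI hp
    have hwI' : w ∉ I := hwI
    refine ⟨fun x hx => (hIQ hx).1, ⟨w, ?_, hwm', hne, ?_, ?_, ?_⟩, hvI⟩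
    · apply Finset.eq_singleton_iff_unique_mem.2
      obtain ⟨y0, hy0⟩ := hne
      have hy0I : y0 ∈ I := Finset.mem_coe.1 hy0
      constructor
      · exact mem_below.2 ⟨⟨hwQ, hwI'⟩, y0, hy0I, (hIQ hy0I).2.1⟩
      · rintro x hx
        obtain ⟨⟨hxQ, hxI⟩, y, hyI, hle⟩ := mem_below.1 hx
        have : x ∈ (P.graft Q v).below I := by
          refine mem_below.2 ⟨⟨by rw [graft_carrier hd hv]; exact Finset.mem_union_right _ hxQ,
            hxI⟩, y, hyI, (graft_le hd hv).2 (Or.inr (Or.inl hle))⟩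
        rw [hb] at this; exact Finset.mem_singleton.1 this
    · exact fun x hx => hIQ (Finset.mem_coe.1 hx)
    · intro x hx y hy
      refine Relation.ReflTransGen.mono ?_ _ _ (hconn x hx y hy)
      rintro a b ⟨ha, hb', hab⟩
      have haQ : a ∈ Q.carrier := (hIQ (Finset.mem_coe.1 ha)).1
      have hbQ : b ∈ Q.carrier := (hIQ (Finset.mem_coe.1 hb')).1
      exact ⟨ha, hb', hab.imp (graft_le_QQ hd hv hbQ) (graft_le_QQ hd hv haQ)⟩
    · intro x hx y hy hcomp
      obtain ⟨hyQ, hwy⟩ := hy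
      exact hclose x hx y ⟨by rw [graft_carrier hd hv]; exact Finset.mem_union_right _ hyQ,
        (graft_le hd hv).2 (Or.inr (Or.inl hwy.1)), hwy.2⟩
        (hcomp.imp (fun h => (graft_le hd hv).2 (Or.inr (Or.inl h)))
          (fun h => (graft_le hd hv).2 (Or.inr (Or.inl h))))

end FinPoset

namespace FinPoset

variable {α : Type*} [DecidableEq α] {P Q : FinPoset α} {v : α}

lemma ext' {A B : FinPoset α} (hc : A.carrier = B.carrier) (hl : A.le = B.le) : A = B := by
  cases A; cases B
  cases hc; cases hl
  rfl

lemma restrict_graft_eq (hd : Disjoint P.carrier Q.carrier) (hv : v ∈ Q.carrier)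
    {J : Finset α} (hJc : J ⊆ Q.carrier) (hvJ : v ∈ J) :
    (P.graft Q v).restrict (P.carrier ∪ J) = P.graft (Q.restrict J) v := by
  have hd2 : Disjoint P.carrier (Q.restrict J).carrier :=
    hd.mono_right (Finset.inter_subset_left)
  have hv2 : v ∈ (Q.restrict J).carrier := Finset.mem_inter.2 ⟨hv, hvJ⟩
  apply ext'
  · show (P.graft Q v).carrier ∩ (P.carrier ∪ J) = _
    rw [graft_carrier hd hv, graft_carrier hd2 hv2]
    show (P.carrier ∪ Q.carrier) ∩ (P.carrier ∪ J) = P.carrier ∪ Q.carrier ∩ J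
    ext a
    simp only [Finset.mem_inter, Finset.mem_union]
    have := @hJc a
    constructor
    · rintro ⟨h1 | h1, h2 | h2⟩ <;> tauto
    · rintro (h | ⟨h1, h2⟩) <;> tauto
  · funext x y
    apply propext
    show (P.graft Q v).le x y ∧ x ∈ P.carrier ∪ J ∧ y ∈ P.carrier ∪ J ↔ _
    rw [graft_le hd2 hv2]
    constructor
    · rintro ⟨hle, hxm, hym⟩
      rcases (graft_le hd hv).1 hle with h | h | ⟨h1, h2⟩
      · exact Or.inl h
      · have hxQ : x ∈ Q.carrier := (Q.mem_of_le h).1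
        have hyQ : y ∈ Q.carrier := (Q.mem_of_le h).2
        have hxJ : x ∈ J := by
          rcases Finset.mem_union.1 hxm with h' | h'
          · exact absurd h' (notin_P hd hxQ)
          · exact h'
        have hyJ : y ∈ J := by
          rcases Finset.mem_union.1 hym with h' | h'
          · exact absurd h' (notin_P hd hyQ)
          · exact h'
        exact Or.inr (Or.inl ⟨h, hxJ, hyJ⟩)
      · have hxQ : x ∈ Q.carrier := (Q.mem_of_le h1).1
        have hxJ : x ∈ J := by
          rcases Finset.mem_union.1 hxm with h' | h'
          · exact absurd h' (notin_P hd hxQ)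
          · exact h'
        exact Or.inr (Or.inr ⟨⟨h1, hxJ, hvJ⟩, h2⟩)
    · rintro (h | ⟨h, hx, hy⟩ | ⟨⟨h, hx, _⟩, hy⟩)
      · exact ⟨(graft_le hd hv).2 (Or.inl h),
          Finset.mem_union_left _ (P.mem_of_le h).1, Finset.mem_union_left _ (P.mem_of_le h).2⟩
      · exact ⟨(graft_le hd hv).2 (Or.inr (Or.inl h)),
          Finset.mem_union_right _ hx, Finset.mem_union_right _ hy⟩
      · exact ⟨(graft_le hd hv).2 (Or.inr (Or.inr ⟨h, hy⟩)),
          Finset.mem_union_right _ hx, Finset.mem_union_left _ hy⟩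

end FinPoset



/-- For finite connected posets `P`, `Q` on disjoint sets and
`v ∈ X₂ \ min(Q)`, the subsets `I` with `I ◎ (P ↘_v Q)` are exactly the `X₁ ∪ J` for
`J ◎ Q` with `v ∈ J`, together with the `J ◎ Q` with `v ∉ J`; moreover for `J ◎ Q`
with `v ∈ J` the induced subposet of `P ↘_v Q` on `X₁ ∪ J` is the grafting
`P ↘_v J`. -/
theorem circSet_graft_not_min {α : Type*} [DecidableEq α] (P Q : FinPoset α)
    (hP : P.Connected) (hQ : Q.Connected) (hd : Disjoint P.carrier Q.carrier)
    (v : α) (hv : v ∈ Q.carrier) (hvm : v ∉ Q.minSet) :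
    (FinPoset.graft P Q v).circSet =
        (Q.circSet.filter (fun J => v ∈ J)).image (fun J => P.carrier ∪ J) ∪
          Q.circSet.filter (fun J => v ∉ J)
      ∧ ∀ J ∈ Q.circSet, v ∈ J →
          (FinPoset.graft P Q v).restrict (P.carrier ∪ J)
            = FinPoset.graft P (Q.restrict J) v := by
  
  constructor
  · ext I
    simp only [FinPoset.mem_circSet, Finset.mem_union, Finset.mem_image, Finset.mem_filter]
    constructor
    · rintro ⟨hIc, hI⟩
      rcases FinPoset.circ_graft_cases hP hd hv hvm hI with
        ⟨J, hJc, hJ, hvJ, rfl⟩ | ⟨hIc', hI', hvI⟩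
      · exact Or.inl ⟨J, ⟨⟨hJc, hJ⟩, hvJ⟩, rfl⟩
      · exact Or.inr ⟨⟨hIc', hI'⟩, hvI⟩
    · rintro (⟨J, ⟨hJm, hvJ⟩, rfl⟩ | ⟨hIm, hvI⟩)
      · obtain ⟨hJc, hJ⟩ := hJm
        refine ⟨?_, FinPoset.circ_union hP hd hv hvm hJc hJ hvJ⟩
        rw [FinPoset.graft_carrier hd hv]
        exact Finset.union_subset_union (le_refl _) hJc
      · obtain ⟨hIc, hI⟩ := hIm
        refine ⟨?_, FinPoset.circ_sub hd hv hvm hIc hI hvI⟩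
        rw [FinPoset.graft_carrier hd hv]
        exact hIc.trans (Finset.subset_union_right)
  · intro J hJm hvJ
    obtain ⟨hJc, _⟩ := FinPoset.mem_circSet.1 hJm
    exact FinPoset.restrict_graft_eq hd hv hJc hvJ
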